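/- If {C_0, C_1, ..., C_d} is a d-critical family in R^d, then the complement R^d \ (C_0 ∪ ... ∪ C_d) has a bounded connected component. -/

import Mathlib

open Set

section Aux

variable {E : Type*} [NormedAddCommGroup E] [NormedSpace ℝ E]

/-- On a segment, a continuous linear functional attains every intermediate value. -/
lemma exists_eq_on_segment (f : E →L[ℝ] ℝ) {a b : E} {c : ℝ}
    (hab : f a ≤ c) (hc : c ≤ f b) : ∃ z ∈ segment ℝ a b, f z = c := by
  set g : ℝ → ℝ := fun t => f ((1 - t) • a + t • b) with hg
  have hgc : Continuous g := by
    apply f.continuous.comp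
    exact (((continuous_const.sub continuous_id).smul continuous_const).add
      (continuous_id.smul continuous_const))
  have h0 : g 0 = f a := by simp [hg]
  have h1 : g 1 = f b := by simp [hg]
  have hmem : c ∈ Icc (g 0) (g 1) := by rw [h0, h1]; exact ⟨hab, hc⟩
  obtain ⟨t, ht, hgt⟩ := intermediate_value_Icc zero_le_one hgc.continuousOn hmem
  exact ⟨(1 - t) • a + t • b, ⟨1 - t, t, by linarith [ht.2], ht.1, by ring, rfl⟩, hgt⟩

/-- **Berge's intersection theorem**: finitely many (at least two) compact convex sets
whose union is convex and such that any `n+1` of the `n+2` sets have a common point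
have a common point. -/
theorem berge_inter : ∀ (n : ℕ) (A : Fin (n + 2) → Set E),
    (∀ i, IsCompact (A i)) → (∀ i, Convex ℝ (A i)) → Convex ℝ (⋃ i, A i) →
    (∀ j, (⋂ i ∈ {i : Fin (n + 2) | i ≠ j}, A i).Nonempty) →
    (⋂ i, A i).Nonempty := by
  intro n
  induction n with
  | zero =>
    intro A hcomp hconv hU h1
    obtain ⟨a, ha⟩ := h1 1
    obtain ⟨b, hb⟩ := h1 0
    have ha0 : a ∈ A 0 := mem_iInter₂.mp ha 0 (by decide)
    have hb1 : b ∈ A 1 := mem_iInter₂.mp hb 1 (by decide)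
    have hI : (⋂ i, A i) = A 0 ∩ A 1 := by
      ext x
      simp [Set.mem_iInter, Fin.forall_fin_two]
    by_contra hcon
    have hdisj : Disjoint (A 0) (A 1) := by
      rw [Set.disjoint_iff_inter_eq_empty, ← hI]
      exact Set.not_nonempty_iff_eq_empty.mp hcon
    obtain ⟨f, u, v, hfu, huv, hfv⟩ :=
      geometric_hahn_banach_compact_closed (hconv 0) (hcomp 0) (hconv 1)
        (hcomp 1).isClosed hdisj
    obtain ⟨z, hzs, hzc⟩ := exists_eq_on_segment f (a := a) (b := b) (c := (u + v) / 2)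
      (le_of_lt (by linarith [hfu a ha0])) (le_of_lt (by linarith [hfv b hb1]))
    have hzU : z ∈ ⋃ i, A i := by
      have := hU.segment_subset (mem_iUnion.mpr ⟨0, ha0⟩) (mem_iUnion.mpr ⟨1, hb1⟩)
      exact this hzs
    obtain ⟨i, hi⟩ := mem_iUnion.mp hzU
    fin_cases i
    · have := hfu z hi; linarith
    · have := hfv z hi; linarith
  | succ n ih =>
    intro A hcomp hconv hU h1
    by_contra hcon
    set L : Fin (n + 3) := Fin.last (n + 2) with hL
    set K : Set E := ⋂ i ∈ {i : Fin (n + 3) | i ≠ L}, A i with hK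
    obtain ⟨y₀, hy₀⟩ := h1 L
    have hne0L : (0 : Fin (n + 3)) ≠ L := by
      simp [hL, Fin.ext_iff]
    have hKclosed : IsClosed K :=
      isClosed_biInter fun i _ => (hcomp i).isClosed
    have hKsub : K ⊆ A 0 := biInter_subset_of_mem hne0L
    have hKcomp : IsCompact K := (hcomp 0).of_isClosed_subset hKclosed hKsub
    have hKconv : Convex ℝ K := convex_iInter₂ fun i _ => hconv i
    have hdisj : Disjoint K (A L) := by
      rw [Set.disjoint_iff_inter_eq_empty]
      by_contra h2
      obtain ⟨z, hzK, hzL⟩ := Set.nonempty_iff_ne_empty.mpr h2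
      refine hcon ⟨z, mem_iInter.mpr fun i => ?_⟩
      by_cases hiL : i = L
      · rw [hiL]; exact hzL
      · exact mem_iInter₂.mp hzK i hiL
    obtain ⟨f, u, v, hfu, huv, hfv⟩ :=
      geometric_hahn_banach_compact_closed hKconv hKcomp (hconv L)
        (hcomp L).isClosed hdisj
    set c : ℝ := (u + v) / 2 with hc
    set H : Set E := {x | f x = c} with hH
    have hHclosed : IsClosed H := isClosed_eq f.continuous continuous_const
    have hHconv : Convex ℝ H := convex_hyperplane ⟨f.map_add, f.map_smul⟩ c
    set A' : Fin (n + 2) → Set E := fun i => A i.castSucc ∩ H with hA'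
    have hUnion : (⋃ i, A' i) = (⋃ i, A i) ∩ H := by
      ext x
      constructor
      · rintro ⟨_, ⟨i, rfl⟩, hx⟩
        exact ⟨mem_iUnion.mpr ⟨i.castSucc, hx.1⟩, hx.2⟩
      · rintro ⟨hx1, hx2⟩
        obtain ⟨i₀, hi₀⟩ := mem_iUnion.mp hx1
        have hi₀L : i₀ ≠ L := by
          intro h
          have := hfv x (h ▸ hi₀)
          have : f x = c := hx2
          simp only [hc] at this
          linarith
        obtain ⟨i, rfl⟩ := Fin.exists_castSucc_eq.mpr hi₀L
        exact mem_iUnion.mpr ⟨i, hi₀, hx2⟩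
    obtain ⟨z, hz⟩ := ih A'
      (fun i => ((hcomp _).inter_right hHclosed))
      (fun i => (hconv _).inter hHconv)
      (by rw [hUnion]; exact hU.inter hHconv)
      (by
        intro j
        obtain ⟨a, ha⟩ := h1 j.castSucc
        have haL : a ∈ A L := mem_iInter₂.mp ha L (Fin.castSucc_lt_last j).ne'
        have hbK : y₀ ∈ K := hy₀
        obtain ⟨z, hzs, hzc⟩ := exists_eq_on_segment f (a := y₀) (b := a) (c := c)
          (le_of_lt (by have := hfu y₀ hbK; simp only [hc]; linarith))
          (le_of_lt (by have := hfv a haL; simp only [hc]; linarith))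
        refine ⟨z, mem_iInter₂.mpr fun i hi => ⟨?_, hzc⟩⟩
        have hbi : y₀ ∈ A i.castSucc :=
          mem_iInter₂.mp hbK i.castSucc (Fin.castSucc_lt_last i).ne
        have hai : a ∈ A i.castSucc :=
          mem_iInter₂.mp ha i.castSucc (by
            simpa [Fin.castSucc_inj] using (hi : i ≠ j))
        exact (hconv i.castSucc).segment_subset hbi hai hzs)
    have hzK : z ∈ K := by
      refine mem_iInter₂.mpr fun i hi => ?_
      obtain ⟨i', rfl⟩ := Fin.exists_castSucc_eq.mpr hi
      exact (mem_iInter.mp hz i').1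
    have hzH : f z = c := (mem_iInter.mp hz 0).2
    have := hfu z hzK
    simp only [hc] at hzH
    linarith

end Aux

/-- The complement of the union of a d-critical family in ℝ^d has a bounded
connected component. -/
theorem critical_family_has_bounded_component (d : ℕ)
    (C : Fin (d + 1) → Set (EuclideanSpace ℝ (Fin d)))
    (hcomp : ∀ i, IsCompact (C i)) (hconv : ∀ i, Convex ℝ (C i))
    (hcrit : ∀ j, (⋂ i ∈ {i : Fin (d + 1) | i ≠ j}, C i).Nonempty)
    (hempty : (⋂ i, C i) = ∅) :
    ∃ x ∈ (⋃ i, C i)ᶜ,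
      Bornology.IsBounded (connectedComponentIn (⋃ i, C i)ᶜ x) := by
  obtain _ | n := d
  · -- d = 0 : the whole space is a single point and the union must be empty.
    have hU : (⋃ i, C i) = ∅ := by
      apply Set.eq_empty_iff_forall_notMem.mpr
      intro x hx
      obtain ⟨i, hi⟩ := mem_iUnion.mp hx
      have hx' : x ∈ ⋂ j, C j := mem_iInter.mpr fun j => by
        have : j = i := Fin.ext (by omega)
        rwa [this]
      rw [hempty] at hx'
      exact hx'
    have hbd : Bornology.IsBounded (Set.univ : Set (EuclideanSpace ℝ (Fin 0))) := by
      rw [isBounded_iff_forall_norm_le]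
      refine ⟨0, fun x _ => ?_⟩
      rw [EuclideanSpace.norm_eq]
      simp
    exact ⟨0, by simp [hU], hbd.subset (subset_univ _)⟩
  · -- d = n + 1
    choose p hp using hcrit
    have hpC : ∀ {i j : Fin (n + 2)}, i ≠ j → p j ∈ C i := fun {i j} hij =>
      mem_iInter₂.mp (hp j) i hij
    -- the p j are affinely independent, else a Radon point lies in all the C i
    have hindep : AffineIndependent ℝ p := by
      by_contra h
      obtain ⟨I, q, hq1, hq2⟩ := Convex.radon_partition h
      have hq : q ∈ ⋂ i, C i := mem_iInter.mpr fun i => by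
        by_cases hiI : i ∈ I
        · refine convexHull_min ?_ (hconv i) hq2
          rintro _ ⟨j, hjI, rfl⟩
          exact hpC fun h => hjI (h ▸ hiI)
        · refine convexHull_min ?_ (hconv i) hq1
          rintro _ ⟨j, hjI, rfl⟩
          exact hpC fun h => hiI (h ▸ hjI)
      rw [hempty] at hq
      exact hq
    have hcard : Fintype.card (Fin (n + 2)) =
        Module.finrank ℝ (EuclideanSpace ℝ (Fin (n + 1))) + 1 := by
      simp [finrank_euclideanSpace_fin]
    have htot : affineSpan ℝ (Set.range p) = ⊤ :=
      hindep.affineSpan_eq_top_iff_card_eq_finrank_add_one.mpr hcard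
    let b : AffineBasis (Fin (n + 2)) ℝ (EuclideanSpace ℝ (Fin (n + 1))) :=
      ⟨p, hindep, htot⟩
    have hbp : ⇑b = p := rfl
    set σ : Set (EuclideanSpace ℝ (Fin (n + 1))) := convexHull ℝ (Set.range p) with hσ
    have hσcomp : IsCompact σ := (Set.finite_range p).isCompact_convexHull ℝ
    have hσclosed : IsClosed σ := hσcomp.isClosed
    have hσconv : Convex ℝ σ := convex_convexHull ℝ _
    have hpσ : ∀ j, p j ∈ σ := fun j => subset_convexHull ℝ _ (mem_range_self j)
    have hσcoord : σ = {x | ∀ i, 0 ≤ b.coord i x} := by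
      rw [hσ, ← hbp]
      exact b.convexHull_eq_nonneg_coord
    -- a point of σ with a vanishing barycentric coordinate lies in the corresponding set
    have hcov : ∀ y ∈ σ, ∀ j, b.coord j y = 0 → y ∈ C j := by
      intro y hyσ j hj0
      have hynn : ∀ i, 0 ≤ b.coord i y := by
        rw [hσcoord] at hyσ; exact hyσ
      set w : Fin (n + 2) → ℝ := fun i => b.coord i y with hw
      set s : Finset (Fin (n + 2)) := Finset.univ.erase j with hs
      have hind : Set.indicator (↑s) w = w := by
        funext i
        by_cases hij : i = j
        · subst hij
          have : i ∉ (↑s : Set (Fin (n + 2))) := by simp [hs]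
          rw [Set.indicator_of_notMem this]
          exact hj0.symm
        · have : i ∈ (↑s : Set (Fin (n + 2))) := by simp [hs, hij]
          rw [Set.indicator_of_mem this]
      have hcomb : s.affineCombination ℝ p w = y := by
        rw [Finset.affineCombination_indicator_subset w p (Finset.subset_univ s), hind]
        have := b.affineCombination_coord_eq_self y
        rw [hbp] at this
        exact this
      have hsum : ∑ i ∈ s, w i = 1 := by
        have h1 : ∑ i, w i = 1 := b.sum_coord_apply_eq_one y
        rw [hs, Finset.sum_erase Finset.univ (show w j = 0 from hj0)]
        exact h1
      rw [← hcomb, affineCombination_eq_centerMass hsum]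
      refine (hconv j).centerMass_mem (fun i _ => hynn i) (by rw [hsum]; norm_num) ?_
      intro i his
      have hij : i ≠ j := by
        rw [hs] at his
        simpa using (Finset.mem_erase.mp his).1
      exact hpC hij.symm
    -- σ is not covered by the union (Berge's theorem)
    have hnotcov : ¬ (σ ⊆ ⋃ i, C i) := by
      intro hsub
      have hUeq : (⋃ i, (C i ∩ σ)) = σ := by
        ext x
        constructor
        · rintro ⟨_, ⟨i, rfl⟩, hx⟩
          exact hx.2
        · intro hx
          obtain ⟨i, hi⟩ := mem_iUnion.mp (hsub hx)
          exact mem_iUnion.mpr ⟨i, hi, hx⟩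
      obtain ⟨z, hz⟩ := berge_inter n (fun i => C i ∩ σ)
        (fun i => (hcomp i).inter_right hσclosed)
        (fun i => (hconv i).inter hσconv)
        (by rw [hUeq]; exact hσconv)
        (fun j => ⟨p j, mem_iInter₂.mpr fun i hi => ⟨hpC hi, hpσ j⟩⟩)
      have : z ∈ ⋂ i, C i := mem_iInter.mpr fun i => (mem_iInter.mp hz i).1
      rw [hempty] at this
      exact this
    obtain ⟨x, hxσ, hxU⟩ := Set.not_subset.mp hnotcov
    -- x is in the interior of σ
    have hint : interior σ = {x | ∀ i, 0 < b.coord i x} := by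
      rw [hσ, ← hbp]
      exact b.interior_convexHull
    have hxint : x ∈ interior σ := by
      rw [hint]
      intro i
      have hxnn : ∀ i, 0 ≤ b.coord i x := by
        have := hxσ; rw [hσcoord] at this; exact this
      rcases (hxnn i).lt_or_eq with h | h
      · exact h
      · exact absurd (mem_iUnion.mpr ⟨i, hcov x hxσ i h.symm⟩) hxU
    -- the frontier of σ is covered by the union
    have hfront : frontier σ ⊆ ⋃ i, C i := by
      intro y hy
      rw [frontier, hσclosed.closure_eq] at hy
      obtain ⟨hyσ, hynotint⟩ := hy
      rw [hint] at hynotint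
      simp only [mem_setOf_eq, not_forall, not_lt] at hynotint
      obtain ⟨i, hi⟩ := hynotint
      have hynn : ∀ i, 0 ≤ b.coord i y := by
        have := hyσ; rw [hσcoord] at this; exact this
      have h0 : b.coord i y = 0 := le_antisymm hi (hynn i)
      exact mem_iUnion.mpr ⟨i, hcov y hyσ i h0⟩
    -- the connected component of x is trapped inside σ
    refine ⟨x, hxU, ?_⟩
    have hconn : IsPreconnected (connectedComponentIn ((⋃ i, C i)ᶜ) x) :=
      ((isConnected_connectedComponentIn_iff (F := (⋃ i, C i)ᶜ) (x := x)).mpr hxU).isPreconnected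
    have hsub2 : connectedComponentIn ((⋃ i, C i)ᶜ) x ⊆ interior σ ∪ σᶜ := by
      intro z hz
      have hzU : z ∈ (⋃ i, C i)ᶜ := connectedComponentIn_subset _ _ hz
      by_cases hzσ : z ∈ σ
      · left
        by_contra hzint
        exact hzU (hfront (by rw [frontier, hσclosed.closure_eq]; exact ⟨hzσ, hzint⟩))
      · right
        exact hzσ
    have hdisj2 : Disjoint (interior σ) σᶜ :=
      Set.disjoint_left.mpr fun a ha hac => hac (interior_subset ha)
    have hT : connectedComponentIn ((⋃ i, C i)ᶜ) x ⊆ interior σ :=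
      hconn.subset_left_of_subset_union isOpen_interior hσclosed.isOpen_compl
        hdisj2 hsub2 ⟨x, mem_connectedComponentIn hxU, hxint⟩
    exact hσcomp.isBounded.subset (hT.trans interior_subset)
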